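/- Let W* ∈ ℝ^{d×q}, X ∈ ℝ^{q×m} with X having the property that every m×m submatrix formed by choosing m rows of X is invertible, and let Ŵ be any fixed assignment of weights. If an allocation of learnable entries of W ∈ ℝ^{d×q} assigns exactly m learnable entries to every row of W, then there exists W agreeing with Ŵ on all non-learnable entries such that WX = W*X. -/

import Mathlib

/-- Linear estimator, maximal allocation: if every m×m submatrix of X (obtained by
choosing m rows) is invertible and the allocation assigns exactly m learnable entries
to every row of W, then the student can match the teacher: there exists W agreeing
with the fixed weights Ŵ off the allocation with W X = W* X. -/
theorem linear_estimator_maximal {d q m : ℕ}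
    (Wstar : Matrix (Fin d) (Fin q) ℝ) (X : Matrix (Fin q) (Fin m) ℝ)
    (hX : ∀ s : Fin m → Fin q, Function.Injective s → IsUnit (X.submatrix s id))
    (What : Matrix (Fin d) (Fin q) ℝ)
    (A : Finset (Fin d × Fin q))
    (hA : ∀ i : Fin d, (A.filter (fun p => p.1 = i)).card = m) :
    ∃ W : Matrix (Fin d) (Fin q) ℝ,
      (∀ i j, (i, j) ∉ A → W i j = What i j) ∧ W * X = Wstar * X := by
  classical
  set S : Fin d → Finset (Fin q) := fun i => (A.filter (fun p => p.1 = i)).image Prod.snd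
    with hS
  have hmem : ∀ i j, j ∈ S i ↔ (i, j) ∈ A := by
    intro i j
    simp only [hS, Finset.mem_image, Finset.mem_filter]
    constructor
    · rintro ⟨⟨a, b⟩, ⟨hab, rfl⟩, rfl⟩; exact hab
    · intro h; exact ⟨(i, j), ⟨h, rfl⟩, rfl⟩
  have hcard : ∀ i, (S i).card = m := by
    intro i
    rw [hS]
    rw [Finset.card_image_of_injOn, hA i]
    rintro ⟨a, b⟩ hab ⟨a', b'⟩ hab' h
    rw [Finset.mem_coe, Finset.mem_filter] at hab hab'
    exact Prod.ext (hab.2.trans hab'.2.symm) h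
  -- order isomorphism enumerating the learnable positions of row i
  let e : ∀ i : Fin d, Fin m ≃o {x // x ∈ S i} := fun i => (S i).orderIsoOfFin (hcard i)
  let s : ∀ i : Fin d, Fin m → Fin q := fun i t => (e i t : Fin q)
  have hsinj : ∀ i, Function.Injective (s i) := by
    intro i a b hab
    exact (e i).injective (Subtype.ext hab)
  -- the submatrix of X for row i
  let M : Fin d → Matrix (Fin m) (Fin m) ℝ := fun i => X.submatrix (s i) id
  have hM : ∀ i, IsUnit (M i) := fun i => hX (s i) (hsinj i)
  -- target row vector
  let c : Fin d → Fin m → ℝ := fun i k =>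
    (∑ j, Wstar i j * X j k) - ∑ j ∈ (S i)ᶜ, What i j * X j k
  let u : Fin d → Fin m → ℝ := fun i => Matrix.vecMul (c i) (M i)⁻¹
  have hu : ∀ i, Matrix.vecMul (u i) (M i) = c i := by
    intro i
    have hdet : IsUnit (M i).det := (Matrix.isUnit_iff_isUnit_det (M i)).1 (hM i)
    rw [show u i = Matrix.vecMul (c i) (M i)⁻¹ from rfl, Matrix.vecMul_vecMul,
      Matrix.nonsing_inv_mul _ hdet, Matrix.vecMul_one]
  refine ⟨fun i j => if h : j ∈ S i then u i ((e i).symm ⟨j, h⟩) else What i j, ?_, ?_⟩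
  · intro i j hij
    have : j ∉ S i := fun h => hij ((hmem i j).1 h)
    simp [this]
  · ext i k
    simp only [Matrix.mul_apply]
    show ∑ j, (if h : j ∈ S i then u i ((e i).symm ⟨j, h⟩) else What i j) * X j k = _
    have hsplit : ∀ (f : Fin q → ℝ), ∑ j, f j = ∑ j ∈ S i, f j + ∑ j ∈ (S i)ᶜ, f j := by
      intro f
      rw [Finset.sum_add_sum_compl]
    rw [hsplit, hsplit]
    have h1 : ∑ j ∈ (S i)ᶜ,
        (if h : j ∈ S i then u i ((e i).symm ⟨j, h⟩) else What i j) * X j k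
        = ∑ j ∈ (S i)ᶜ, What i j * X j k := by
      apply Finset.sum_congr rfl
      intro j hj
      rw [Finset.mem_compl] at hj
      rw [dif_neg hj]
    have h2 : ∑ j ∈ S i,
        (if h : j ∈ S i then u i ((e i).symm ⟨j, h⟩) else What i j) * X j k
        = ∑ j, Wstar i j * X j k - ∑ j ∈ (S i)ᶜ, What i j * X j k := by
      have hattach : ∑ j ∈ S i,
          (if h : j ∈ S i then u i ((e i).symm ⟨j, h⟩) else What i j) * X j k
          = ∑ j : {x // x ∈ S i}, u i ((e i).symm j) * X (j : Fin q) k := by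
        rw [← Finset.sum_attach]
        apply Finset.sum_congr rfl
        intro j _
        rw [dif_pos j.2]
      rw [hattach]
      have hre : ∑ j : {x // x ∈ S i}, u i ((e i).symm j) * X (j : Fin q) k
          = ∑ t : Fin m, u i t * X (s i t) k := by
        rw [← Equiv.sum_comp (e i).toEquiv (fun j => u i ((e i).symm j) * X (j : Fin q) k)]
        apply Finset.sum_congr rfl
        intro t _
        simp [s]
      rw [hre]
      have : ∑ t : Fin m, u i t * X (s i t) k = Matrix.vecMul (u i) (M i) k := by
        simp [Matrix.vecMul, dotProduct, M, Matrix.submatrix_apply]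
      rw [this, hu i]
    rw [h1, h2, hsplit fun j => Wstar i j * X j k]
    ring
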